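/- (Mellin representation of the fermionic one-loop Ω-potential.) Let (ω_k)_{k∈ℕ} be a sequence of positive real numbers, c > 0 a real number with Σ_k ω_k^{−c} < ∞, and β > 0. Then the series Σ_k log(1 + e^{−β ω_k}) converges, the vertical-line integral below converges absolutely, and Σ_k log(1 + e^{−β ω_k}) = (1/(2π)) ∫_{−∞}^{∞} Γ(c + it) · (1 − 2^{−(c+it)}) · ζ(1 + c + it) · β^{−(c+it)} · (Σ_k ω_k^{−(c+it)}) dt. -/

import Mathlib

open MeasureTheory Complex Filter

/-- Norm of complex Gamma bounded by real Gamma of the real part. -/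
lemma stmt16_gamma_norm_le {z : ℂ} (hz : 0 < z.re) :
    ‖Complex.Gamma z‖ ≤ Real.Gamma z.re := by
  rw [Complex.Gamma_eq_integral hz, Complex.GammaIntegral, Real.Gamma_eq_integral hz]
  refine norm_integral_le_of_norm_le (Real.GammaIntegral_convergent hz) ?_
  rw [ae_restrict_iff' measurableSet_Ioi]
  filter_upwards with x hx
  rw [norm_mul,
    Complex.norm_cpow_eq_rpow_re_of_pos hx, Complex.norm_real, Real.norm_eq_abs, Real.abs_exp,
    Complex.sub_re, Complex.one_re]

set_option maxHeartbeats 1000000 in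

lemma stmt16_eta_hasSum {z : ℂ} (hz : 1 < z.re) :
    HasSum (fun n : ℕ => (-1 : ℂ) ^ n / ((n : ℂ) + 1) ^ z)
      ((1 - 2 ^ (1 - z)) * riemannZeta z) := by
  have hz0 : z ≠ 0 := by
    intro h; rw [h] at hz; norm_num at hz
  have hsum : Summable fun n : ℕ => 1 / (n : ℂ) ^ z :=
    Complex.summable_one_div_nat_cpow.mpr hz
  have hzeta : HasSum (fun n : ℕ => 1 / (n : ℂ) ^ z) (riemannZeta z) := by
    rw [zeta_eq_tsum_one_div_nat_cpow hz]; exact hsum.hasSum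
  have hkey : ∀ k : ℕ, 1 / ((2 * k : ℕ) : ℂ) ^ z = 2 ^ (-z) * (1 / (k : ℂ) ^ z) := by
    intro k
    rcases Nat.eq_zero_or_pos k with rfl | hk
    · simp [Complex.zero_cpow hz0]
    · have h2 : ((2 * k : ℕ) : ℂ) ^ z = (2 : ℂ) ^ z * (k : ℂ) ^ z := by
        have := mul_cpow_ofReal_nonneg (by norm_num : (0:ℝ) ≤ 2)
          (by positivity : (0:ℝ) ≤ (k:ℝ)) z
        push_cast at this ⊢
        exact this
      rw [h2, Complex.cpow_neg]
      ring
  have heven : HasSum (fun k : ℕ => 1 / ((2 * k : ℕ) : ℂ) ^ z)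
      (2 ^ (-z) * riemannZeta z) := by
    simp_rw [hkey]; exact hzeta.mul_left _
  have hinj : Function.Injective fun k : ℕ => 2 * k + 1 := by
    intro a b h
    simp only [] at h
    omega
  have hodd_summable : Summable fun k : ℕ => 1 / ((2 * k + 1 : ℕ) : ℂ) ^ z :=
    hsum.comp_injective hinj
  set B := ∑' k : ℕ, 1 / ((2 * k + 1 : ℕ) : ℂ) ^ z with hB
  have hodd : HasSum (fun k : ℕ => 1 / ((2 * k + 1 : ℕ) : ℂ) ^ z) B :=
    hodd_summable.hasSum
  have htot : HasSum (fun n : ℕ => 1 / (n : ℂ) ^ z) (2 ^ (-z) * riemannZeta z + B) :=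
    heven.even_add_odd hodd
  have hBeq : B = riemannZeta z - 2 ^ (-z) * riemannZeta z := by
    have := hzeta.unique htot
    linear_combination -this
  set g : ℕ → ℂ := fun n => (-1 : ℂ) ^ (n + 1) / (n : ℂ) ^ z with hgdef
  have hge : ∀ k, g (2 * k) = -(1 / ((2 * k : ℕ) : ℂ) ^ z) := by
    intro k
    simp only [hgdef, pow_succ, pow_mul, neg_one_sq, one_pow, one_mul]
    push_cast
    ring
  have hgo : ∀ k, g (2 * k + 1) = 1 / ((2 * k + 1 : ℕ) : ℂ) ^ z := by
    intro k
    simp only [hgdef]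
    have : (-1 : ℂ) ^ (2 * k + 1 + 1) = 1 := by
      rw [show 2 * k + 1 + 1 = 2 * (k + 1) by ring, pow_mul, neg_one_sq, one_pow]
    push_cast [this]
    ring
  have He' : HasSum (fun k : ℕ => g (2 * k)) (-(2 ^ (-z) * riemannZeta z)) := by
    simp_rw [hge]; exact heven.neg
  have Ho' : HasSum (fun k : ℕ => g (2 * k + 1)) B := by
    simp_rw [hgo]; exact hodd
  have hgsum : HasSum g (-(2 ^ (-z) * riemannZeta z) + B) := He'.even_add_odd Ho'
  have hval : -(2 ^ (-z) * riemannZeta z) + B = (1 - 2 ^ (1 - z)) * riemannZeta z := by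
    have h2 : (2 : ℂ) ^ (1 - z) = 2 * 2 ^ (-z) := by
      rw [sub_eq_add_neg, Complex.cpow_add _ _ two_ne_zero, Complex.cpow_one]
    rw [hBeq, h2]
    ring
  rw [hval] at hgsum
  have := (hasSum_nat_add_iff' 1).mpr hgsum
  simp only [Finset.range_one, Finset.sum_singleton] at this
  have hg0 : g 0 = 0 := by simp [hgdef, Complex.zero_cpow hz0]
  rw [hg0, sub_zero] at this
  refine this.congr_fun fun n => ?_
  simp only [hgdef]
  push_cast
  rw [show n + 1 + 1 = n + 2 by ring, pow_add]
  norm_num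

lemma stmt16_zeta_norm {z : ℂ} (hz : 1 < z.re) :
    ‖riemannZeta z‖ ≤ ∑' n : ℕ, 1 / (n : ℝ) ^ z.re := by
  have hz0 : z ≠ 0 := by intro h; rw [h] at hz; norm_num at hz
  have hnorm : ∀ n : ℕ, ‖1 / (n : ℂ) ^ z‖ = 1 / (n : ℝ) ^ z.re := by
    intro n
    rcases Nat.eq_zero_or_pos n with rfl | hn
    · simp [Complex.zero_cpow hz0, Real.zero_rpow (by linarith : z.re ≠ 0)]
    · have hn' : (0 : ℝ) < (n : ℝ) := by exact_mod_cast hn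
      rw [norm_div, norm_one,
        show ((n : ℂ)) = (((n : ℝ) : ℂ)) by push_cast; ring,
        Complex.norm_cpow_eq_rpow_re_of_pos hn']
  have hsum : Summable fun n : ℕ => ‖1 / (n : ℂ) ^ z‖ :=
    (Complex.summable_one_div_nat_cpow.mpr hz).norm
  rw [zeta_eq_tsum_one_div_nat_cpow hz]
  calc ‖∑' n : ℕ, 1 / (n : ℂ) ^ z‖ ≤ ∑' n : ℕ, ‖1 / (n : ℂ) ^ z‖ :=
        norm_tsum_le_tsum_norm hsum
    _ = ∑' n : ℕ, 1 / (n : ℝ) ^ z.re := tsum_congr hnorm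

lemma stmt16_gamma_vert_bound {c : ℝ} (hc : 0 < c) (t : ℝ) :
    ‖Complex.Gamma ((c : ℂ) + t * I)‖
      ≤ Real.Gamma (c + 2) * (1 + 1 / (c * (c + 1))) / (1 + t ^ 2) := by
  set s : ℂ := (c : ℂ) + t * I with hs
  have hsre : s.re = c := by simp [hs]
  have hsim : s.im = t := by simp [hs]
  have hs0 : s ≠ 0 := fun h => by rw [h] at hsre; simp at hsre; linarith
  have hs1 : s + 1 ≠ 0 := fun h => by
    have : (s + 1).re = c + 1 := by simp [hsre]
    rw [h] at this; simp at this; linarith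
  have hgam : Complex.Gamma (s + 2) = (s + 1) * (s * Complex.Gamma s) := by
    rw [show s + 2 = s + 1 + 1 by ring, Complex.Gamma_add_one _ hs1,
      Complex.Gamma_add_one _ hs0]
  have hre2 : (s + 2).re = c + 2 := by simp [hsre]
  have hG2 : ‖Complex.Gamma (s + 2)‖ ≤ Real.Gamma (c + 2) := by
    have := stmt16_gamma_norm_le (z := s + 2) (by rw [hre2]; linarith)
    rwa [hre2] at this
  rw [hgam] at hG2
  rw [norm_mul, norm_mul] at hG2
  set X := ‖s‖
  set Y := ‖s + 1‖
  set g := ‖Complex.Gamma s‖ with hgdef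
  have hXc : c ≤ X := by
    have := Complex.abs_re_le_norm s
    rw [hsre] at this
    calc c = |c| := (abs_of_pos hc).symm
      _ ≤ X := this
  have hXt : |t| ≤ X := by
    have := Complex.abs_im_le_norm s
    rwa [hsim] at this
  have hYc : c + 1 ≤ Y := by
    have := Complex.abs_re_le_norm (s + 1)
    have h1 : (s + 1).re = c + 1 := by simp [hsre]
    rw [h1] at this
    calc c + 1 = |c + 1| := (abs_of_pos (by linarith)).symm
      _ ≤ Y := this
  have hYt : |t| ≤ Y := by
    have := Complex.abs_im_le_norm (s + 1)
    have h1 : (s + 1).im = t := by simp [hsim]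
    rwa [h1] at this
  have hg0 : 0 ≤ g := norm_nonneg _
  have hq : (0 : ℝ) < c * (c + 1) := by positivity
  have hGpos : 0 < Real.Gamma (c + 2) := Real.Gamma_pos_of_pos (by linarith)
  -- two key inequalities
  have hXY : c * (c + 1) ≤ X * Y :=
    mul_le_mul hXc hYc (by linarith) (le_trans (by linarith) hXc)
  have htt : t ^ 2 ≤ X * Y := by
    calc t ^ 2 = |t| * |t| := by rw [← _root_.sq_abs t]; ring
      _ ≤ X * Y := mul_le_mul hXt hYt (abs_nonneg t) (le_trans (by linarith) hXc)
  have h1 : c * (c + 1) * g ≤ Real.Gamma (c + 2) := by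
    calc c * (c + 1) * g ≤ X * Y * g := mul_le_mul_of_nonneg_right hXY hg0
      _ = Y * (X * g) := by ring
      _ ≤ Real.Gamma (c + 2) := hG2
  have h2 : t ^ 2 * g ≤ Real.Gamma (c + 2) := by
    calc t ^ 2 * g ≤ X * Y * g := mul_le_mul_of_nonneg_right htt hg0
      _ = Y * (X * g) := by ring
      _ ≤ Real.Gamma (c + 2) := hG2
  have hg1 : g ≤ Real.Gamma (c + 2) / (c * (c + 1)) := by
    rw [le_div_iff₀ hq]; linarith
  rw [le_div_iff₀ (by positivity : (0:ℝ) < 1 + t ^ 2)]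
  have : g * (1 + t ^ 2) = g + t ^ 2 * g := by ring
  rw [this, mul_add, mul_one, mul_one_div]
  linarith

set_option maxHeartbeats 1000000 in
lemma stmt16_mellin_log {s : ℂ} (hs : 0 < s.re) :
    mellin (fun x : ℝ => (Real.log (1 + Real.exp (-x)) : ℂ)) s
      = Complex.Gamma s * ((1 - 2 ^ (-s)) * riemannZeta (s + 1)) := by
  have hmain := hasSum_mellin (ι := ℕ) (a := fun n => (-1 : ℂ) ^ n / (n + 1))
    (p := fun n => (n : ℝ) + 1) (F := fun x : ℝ => (Real.log (1 + Real.exp (-x)) : ℂ))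
    (s := s) (fun n => Or.inr (by positivity)) hs ?_ ?_
  · -- identify the Dirichlet series
    have heta : HasSum (fun n : ℕ => (-1 : ℂ) ^ n / ((n : ℂ) + 1) ^ (s + 1))
        ((1 - 2 ^ (1 - (s + 1))) * riemannZeta (s + 1)) :=
      stmt16_eta_hasSum (by simp [Complex.add_re]; linarith)
    have h1 : (1 : ℂ) - (s + 1) = -s := by ring
    rw [h1] at heta
    have heq : ∀ n : ℕ, Complex.Gamma s * ((-1 : ℂ) ^ n / (n + 1)) / (((n : ℝ) + 1 : ℝ) : ℂ) ^ s
        = Complex.Gamma s * ((-1 : ℂ) ^ n / ((n : ℂ) + 1) ^ (s + 1)) := by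
      intro n
      have hne : ((n : ℂ) + 1) ≠ 0 := Nat.cast_add_one_ne_zero n
      have hpow : ((n : ℂ) + 1) ^ (s + 1) = ((n : ℂ) + 1) ^ s * ((n : ℂ) + 1) := by
        rw [Complex.cpow_add _ _ hne, Complex.cpow_one]
      have hcast : (((n : ℝ) + 1 : ℝ) : ℂ) = (n : ℂ) + 1 := by push_cast; ring
      have hpne : ((n : ℂ) + 1) ^ s ≠ 0 := by
        simp [Complex.cpow_eq_zero_iff, hne]
      rw [hcast, hpow]
      field_simp
    rw [show (fun i : ℕ => Complex.Gamma s * ((-1 : ℂ) ^ i / (i + 1)) /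
        (((i : ℝ) + 1 : ℝ) : ℂ) ^ s) = fun i : ℕ =>
        Complex.Gamma s * ((-1 : ℂ) ^ i / ((i : ℂ) + 1) ^ (s + 1)) from funext heq] at hmain
    exact ((heta.mul_left _).unique hmain).symm
  · -- pointwise HasSum of the log series
    intro x hx
    rw [Set.mem_Ioi] at hx
    have hlt : |(-Real.exp (-x))| < 1 := by
      rw [abs_neg, Real.abs_exp]
      exact Real.exp_lt_one_iff.mpr (by linarith)
    have h := (Real.hasSum_pow_div_log_of_abs_lt_one hlt).neg
    rw [sub_neg_eq_add, neg_neg] at h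
    have h' := (Complex.hasSum_ofReal).mpr h
    refine h'.congr_fun fun n => ?_
    push_cast
    have he : Complex.exp (-(x:ℂ)) ^ (n + 1) = Complex.exp (-((n:ℂ) + 1) * x) := by
      rw [← Complex.exp_nat_mul]
      congr 1
      push_cast
      ring
    rw [show (-Complex.exp (-(x:ℂ))) ^ (n + 1)
      = (-1 : ℂ) ^ (n + 1) * Complex.exp (-((n:ℂ) + 1) * x) from by rw [neg_pow, he]]
    ring
  · -- summability of coefficients
    have h0 : Summable fun n : ℕ => 1 / ((n : ℝ) + 1) ^ (1 + s.re) := by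
      have := Real.summable_one_div_nat_rpow.mpr (show 1 < 1 + s.re by linarith)
      exact_mod_cast (summable_nat_add_iff 1).mpr this
    refine h0.congr fun n => ?_
    have hn : (0 : ℝ) < (n : ℝ) + 1 := by positivity
    have hnc : ((n : ℂ) + 1) = (((n : ℝ) + 1 : ℝ) : ℂ) := by push_cast; ring
    rw [norm_div, norm_pow, norm_neg, norm_one, one_pow, hnc, Complex.norm_real,
      Real.norm_eq_abs, abs_of_pos hn, Real.rpow_add hn, Real.rpow_one, div_div]

set_option maxHeartbeats 2000000 in
/-- Mellin representation of the fermionic one-loop Ω-potential. If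
`(ω_k)` are positive with `∑_k ω_k^{−c} < ∞` for some `c > 0` and `β > 0`, then
`∑_k log(1 + e^{−β ω_k})
  = (1/2π) ∫_ℝ Γ(c+it) (1 − 2^{−(c+it)}) ζ(1+c+it) β^{−(c+it)} (∑_k ω_k^{−(c+it)}) dt`,
with the series convergent and the vertical-line integral absolutely convergent. -/
theorem stmt16 (ω : ℕ → ℝ) (hω : ∀ k, 0 < ω k) (c : ℝ) (hc : 0 < c)
    (hsum : Summable fun k => ω k ^ (-c)) (β : ℝ) (hβ : 0 < β) :
    Summable (fun k => Real.log (1 + Real.exp (-(β * ω k)))) ∧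
    Integrable (fun t : ℝ =>
      Complex.Gamma ((c : ℂ) + (t : ℂ) * Complex.I) *
        (1 - (2 : ℂ) ^ (-((c : ℂ) + (t : ℂ) * Complex.I))) *
        riemannZeta (1 + (c : ℂ) + (t : ℂ) * Complex.I) *
        (β : ℂ) ^ (-((c : ℂ) + (t : ℂ) * Complex.I)) *
        ∑' k, (ω k : ℂ) ^ (-((c : ℂ) + (t : ℂ) * Complex.I))) ∧
    (∑' k, (Real.log (1 + Real.exp (-(β * ω k))) : ℂ))
      = (1 / (2 * (Real.pi : ℂ))) *
          ∫ t : ℝ, Complex.Gamma ((c : ℂ) + (t : ℂ) * Complex.I) *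
            (1 - (2 : ℂ) ^ (-((c : ℂ) + (t : ℂ) * Complex.I))) *
            riemannZeta (1 + (c : ℂ) + (t : ℂ) * Complex.I) *
            (β : ℂ) ^ (-((c : ℂ) + (t : ℂ) * Complex.I)) *
            ∑' k, (ω k : ℂ) ^ (-((c : ℂ) + (t : ℂ) * Complex.I)) := by
  have hπ : (0 : ℝ) < Real.pi := Real.pi_pos
  have hsre : ∀ t : ℝ, ((c : ℂ) + (t : ℂ) * I).re = c := fun t => by simp
  have hnegre : ∀ t : ℝ, (-((c : ℂ) + (t : ℂ) * I)).re = -c := fun t => by simp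
  -- norm of cpow with positive real base
  have hnormpow : ∀ x : ℝ, 0 < x → ∀ t : ℝ,
      ‖((x : ℝ) : ℂ) ^ (-((c : ℂ) + (t : ℂ) * I))‖ = x ^ (-c) := by
    intro x hx t
    rw [Complex.norm_cpow_eq_rpow_re_of_pos hx, hnegre]
  -- continuity of cpow with constant nonzero base
  have hccont : ∀ a : ℂ, a ≠ 0 → Continuous fun t : ℝ => a ^ (-((c : ℂ) + (t : ℂ) * I)) := by
    intro a ha
    refine continuous_iff_continuousAt.mpr fun t => ?_
    exact (continuousAt_const_cpow ha).comp (Continuous.continuousAt (by fun_prop))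
  -- the function G = Gamma * eta-factor * zeta
  set G : ℝ → ℂ := fun t => Complex.Gamma ((c : ℂ) + (t : ℂ) * I) *
      ((1 - (2 : ℂ) ^ (-((c : ℂ) + (t : ℂ) * I))) *
        riemannZeta (((c : ℂ) + (t : ℂ) * I) + 1)) with hGdef
  -- continuity of G
  have hΓcont : Continuous fun t : ℝ => Complex.Gamma ((c : ℂ) + (t : ℂ) * I) := by
    refine continuous_iff_continuousAt.mpr fun t => ?_
    refine (Complex.differentiableAt_Gamma _ fun m => ?_).continuousAt.comp
      (Continuous.continuousAt (by fun_prop))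
    intro h
    have := congrArg Complex.re h
    rw [hsre] at this
    simp at this
    linarith [this, Nat.cast_nonneg (α := ℝ) m]
  have hζcont : Continuous fun t : ℝ => riemannZeta (((c : ℂ) + (t : ℂ) * I) + 1) := by
    refine continuous_iff_continuousAt.mpr fun t => ?_
    refine (differentiableAt_riemannZeta ?_).continuousAt.comp
      (Continuous.continuousAt (by fun_prop))
    intro h
    have := congrArg Complex.re h
    simp [hsre] at this
    linarith
  have hGcont : Continuous G := by
    rw [hGdef]
    exact hΓcont.mul ((continuous_const.sub (hccont 2 two_ne_zero)).mul hζcont)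
  -- bound for G
  set Z : ℝ := ∑' n : ℕ, 1 / (n : ℝ) ^ (1 + c) with hZdef
  set A : ℝ := Real.Gamma (c + 2) * (1 + 1 / (c * (c + 1))) with hAdef
  set CG : ℝ := A * ((1 + (2 : ℝ) ^ (-c)) * Z) with hCGdef
  have hZ0 : 0 ≤ Z := tsum_nonneg fun n => by positivity
  have hA0 : 0 ≤ A := by
    have h1 := Real.Gamma_pos_of_pos (show (0:ℝ) < c + 2 by linarith)
    have h2 : (0:ℝ) < 1 + 1 / (c * (c + 1)) := by positivity
    rw [hAdef]
    positivity
  have hGbound : ∀ t : ℝ, ‖G t‖ ≤ CG / (1 + t ^ 2) := by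
    intro t
    rw [hGdef]
    simp only [norm_mul]
    have h1 : ‖Complex.Gamma ((c : ℂ) + (t : ℂ) * I)‖ ≤ A / (1 + t ^ 2) :=
      stmt16_gamma_vert_bound hc t
    have h2 : ‖1 - (2 : ℂ) ^ (-((c : ℂ) + (t : ℂ) * I))‖ ≤ 1 + (2 : ℝ) ^ (-c) := by
      refine (norm_sub_le _ _).trans ?_
      rw [norm_one, show ((2:ℂ)) = (((2:ℝ)):ℂ) by norm_num, hnormpow 2 (by norm_num) t]
    have h3 : ‖riemannZeta (((c : ℂ) + (t : ℂ) * I) + 1)‖ ≤ Z := by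
      have hre : ((((c : ℂ) + (t : ℂ) * I)) + 1).re = 1 + c := by simp; ring
      have := stmt16_zeta_norm (z := ((c : ℂ) + (t : ℂ) * I) + 1) (by rw [hre]; linarith)
      rwa [hre] at this
    calc ‖Complex.Gamma ((c : ℂ) + (t : ℂ) * I)‖ *
          (‖1 - (2 : ℂ) ^ (-((c : ℂ) + (t : ℂ) * I))‖ *
            ‖riemannZeta (((c : ℂ) + (t : ℂ) * I) + 1)‖)
        ≤ (A / (1 + t ^ 2)) * ((1 + (2 : ℝ) ^ (-c)) * Z) := by
          refine mul_le_mul h1 (mul_le_mul h2 h3 (norm_nonneg _) ?_) (by positivity) ?_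
          · positivity
          · exact div_nonneg hA0 (by positivity)
      _ = CG / (1 + t ^ 2) := by rw [hCGdef]; ring
  have hGint : Integrable G := by
    refine Integrable.mono' ((integrable_inv_one_add_sq).const_mul CG)
      hGcont.aestronglyMeasurable (ae_of_all _ fun t => ?_)
    rw [mul_comm CG, ← div_eq_inv_mul]
    exact hGbound t
  -- Mellin identification
  have hFlogcont : Continuous fun x : ℝ => (Real.log (1 + Real.exp (-x)) : ℂ) := by
    refine Complex.continuous_ofReal.comp ?_
    exact Continuous.log (continuous_const.add (Real.continuous_exp.comp continuous_neg))
      fun x => by positivity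
  have hmel : ∀ t : ℝ, mellin (fun x : ℝ => (Real.log (1 + Real.exp (-x)) : ℂ))
      ((c : ℂ) + (t : ℂ) * I) = G t := by
    intro t
    rw [hGdef]
    exact stmt16_mellin_log (by rw [hsre]; exact hc)
  have hvert : VerticalIntegrable
      (mellin fun x : ℝ => (Real.log (1 + Real.exp (-x)) : ℂ)) c := by
    refine hGint.congr (ae_of_all _ fun t => (hmel t).symm)
  have hconv : MellinConvergent (fun x : ℝ => (Real.log (1 + Real.exp (-x)) : ℂ)) (c : ℂ) := by
    refine Integrable.mono' (Real.GammaIntegral_convergent hc) ?_ ?_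
    · refine ContinuousOn.aestronglyMeasurable ?_ measurableSet_Ioi
      refine ContinuousOn.fun_smul ?_ (Continuous.continuousOn hFlogcont)
      intro x hx
      have : ContinuousAt (fun y : ℂ => y ^ ((c : ℂ) - 1)) (x : ℂ) :=
        continuousAt_cpow_const (Complex.ofReal_mem_slitPlane.2 hx)
      exact (this.comp Complex.continuous_ofReal.continuousAt).continuousWithinAt
    · rw [ae_restrict_iff' measurableSet_Ioi]
      filter_upwards with x hx
      rw [Set.mem_Ioi] at hx
      have hlog0 : 0 ≤ Real.log (1 + Real.exp (-x)) :=
        Real.log_nonneg (by nlinarith [Real.exp_pos (-x)])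
      have hlogle : Real.log (1 + Real.exp (-x)) ≤ Real.exp (-x) := by
        have := Real.log_le_sub_one_of_pos (show (0:ℝ) < 1 + Real.exp (-x) by positivity)
        linarith
      rw [norm_smul, Complex.norm_cpow_eq_rpow_re_of_pos hx]
      simp only [Complex.sub_re, Complex.ofReal_re, Complex.one_re]
      simp only [Complex.norm_real, Real.norm_eq_abs, _root_.abs_of_nonneg hlog0]
      calc x ^ (c - 1) * Real.log (1 + Real.exp (-x))
          ≤ x ^ (c - 1) * Real.exp (-x) := by gcongr
        _ = Real.exp (-x) * x ^ (c - 1) := by ring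
  -- inversion for each k
  have hinv : ∀ k : ℕ, (Real.log (1 + Real.exp (-(β * ω k))) : ℂ)
      = ((1 / (2 * Real.pi) : ℝ) : ℂ) *
          ∫ t : ℝ, ((β * ω k : ℝ) : ℂ) ^ (-((c : ℂ) + (t : ℂ) * I)) * G t := by
    intro k
    have hx : 0 < β * ω k := mul_pos hβ (hω k)
    have hcx : ContinuousAt (fun x : ℝ => (Real.log (1 + Real.exp (-x)) : ℂ)) (β * ω k) :=
      hFlogcont.continuousAt
    have hmi := mellinInv_mellin_eq c (fun x : ℝ => (Real.log (1 + Real.exp (-x)) : ℂ))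
      hx hconv hvert hcx
    simp only [mellinInv, smul_eq_mul, hmel, Complex.real_smul] at hmi
    rw [← hmi]
  -- H family and summation
  set H : ℕ → ℝ → ℂ := fun k t => ((β * ω k : ℝ) : ℂ) ^ (-((c : ℂ) + (t : ℂ) * I)) * G t
    with hHdef
  have hHnorm : ∀ k t, ‖H k t‖ = (β * ω k) ^ (-c) * ‖G t‖ := by
    intro k t
    simp only [hHdef, norm_mul]
    rw [hnormpow (β * ω k) (mul_pos hβ (hω k)) t]
  have hHcont : ∀ k, Continuous (H k) := by
    intro k
    exact (hccont _ (Complex.ofReal_ne_zero.mpr (mul_pos hβ (hω k)).ne')).mul hGcont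
  have hHint : ∀ k, Integrable (H k) := by
    intro k
    refine Integrable.mono' (hGint.norm.const_mul ((β * ω k) ^ (-c)))
      (hHcont k).aestronglyMeasurable (ae_of_all _ fun t => le_of_eq (hHnorm k t))
  have hrpow_mul : ∀ k, (β * ω k) ^ (-c) = β ^ (-c) * ω k ^ (-c) := fun k =>
    Real.mul_rpow hβ.le (hω k).le
  have hHsumint : Summable fun k => ∫ t : ℝ, ‖H k t‖ := by
    have heq : ∀ k, ∫ t : ℝ, ‖H k t‖ = (β * ω k) ^ (-c) * ∫ t : ℝ, ‖G t‖ := by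
      intro k
      rw [← integral_const_mul]
      exact integral_congr_ae (ae_of_all _ fun t => hHnorm k t)
    refine Summable.congr (f := fun k => (β ^ (-c) * ∫ t : ℝ, ‖G t‖) * ω k ^ (-c)) ?_ ?_
    · exact hsum.mul_left _
    · intro k
      rw [heq k, hrpow_mul k]
      ring
  have hkey := hasSum_integral_of_summable_integral_norm (F := H) hHint hHsumint
  -- pointwise tsum identity
  have hTsummable : ∀ t : ℝ, Summable fun k => ((ω k : ℝ) : ℂ) ^ (-((c : ℂ) + (t : ℂ) * I)) := by
    intro t
    refine Summable.of_norm ?_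
    refine hsum.congr fun k => ?_
    exact (hnormpow (ω k) (hω k) t).symm
  have hTcont : Continuous fun t : ℝ =>
      ∑' k, ((ω k : ℝ) : ℂ) ^ (-((c : ℂ) + (t : ℂ) * I)) := by
    refine continuous_tsum (u := fun k => ω k ^ (-c))
      (fun k => hccont _ (Complex.ofReal_ne_zero.mpr (hω k).ne')) hsum ?_
    intro k t
    exact le_of_eq (hnormpow (ω k) (hω k) t)
  have hpt : ∀ t : ℝ, (∑' k, H k t)
      = Complex.Gamma ((c : ℂ) + (t : ℂ) * I) *
        (1 - (2 : ℂ) ^ (-((c : ℂ) + (t : ℂ) * I))) *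
        riemannZeta (1 + (c : ℂ) + (t : ℂ) * I) *
        (β : ℂ) ^ (-((c : ℂ) + (t : ℂ) * I)) *
        ∑' k, (ω k : ℂ) ^ (-((c : ℂ) + (t : ℂ) * I)) := by
    intro t
    have hsplit : ∀ k, H k t = ((ω k : ℝ) : ℂ) ^ (-((c : ℂ) + (t : ℂ) * I)) *
        ((β : ℂ) ^ (-((c : ℂ) + (t : ℂ) * I)) * G t) := by
      intro k
      simp only [hHdef]
      have hcast : ((β * ω k : ℝ) : ℂ) = ((β : ℝ) : ℂ) * ((ω k : ℝ) : ℂ) := by push_cast; ring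
      rw [hcast, mul_cpow_ofReal_nonneg hβ.le (hω k).le]
      ring
    rw [tsum_congr hsplit, tsum_mul_right]
    simp only [hGdef]
    have harg : ((c : ℂ) + (t : ℂ) * I) + 1 = 1 + (c : ℂ) + (t : ℂ) * I := by ring
    rw [harg]
    ring
  -- main HasSum
  have hlog : HasSum (fun k => (Real.log (1 + Real.exp (-(β * ω k))) : ℂ))
      ((1 / (2 * (Real.pi : ℂ))) *
        ∫ t : ℝ, Complex.Gamma ((c : ℂ) + (t : ℂ) * I) *
          (1 - (2 : ℂ) ^ (-((c : ℂ) + (t : ℂ) * I))) *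
          riemannZeta (1 + (c : ℂ) + (t : ℂ) * I) *
          (β : ℂ) ^ (-((c : ℂ) + (t : ℂ) * I)) *
          ∑' k, (ω k : ℂ) ^ (-((c : ℂ) + (t : ℂ) * I))) := by
    have h1 := hkey.mul_left (1 / (2 * (Real.pi : ℂ)))
    have h2 : (∫ t : ℝ, ∑' k, H k t)
        = ∫ t : ℝ, Complex.Gamma ((c : ℂ) + (t : ℂ) * I) *
            (1 - (2 : ℂ) ^ (-((c : ℂ) + (t : ℂ) * I))) *
            riemannZeta (1 + (c : ℂ) + (t : ℂ) * I) *
            (β : ℂ) ^ (-((c : ℂ) + (t : ℂ) * I)) *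
            ∑' k, (ω k : ℂ) ^ (-((c : ℂ) + (t : ℂ) * I)) :=
      integral_congr_ae (ae_of_all _ fun t => hpt t)
    rw [h2] at h1
    refine h1.congr_fun fun k => ?_
    rw [hinv k]
    congr 1
    push_cast
    ring
  refine ⟨?_, ?_, ?_⟩
  · exact Complex.summable_ofReal.mp hlog.summable
  · -- integrability of the integrand
    have hIcont : Continuous fun t : ℝ =>
        Complex.Gamma ((c : ℂ) + (t : ℂ) * I) *
          (1 - (2 : ℂ) ^ (-((c : ℂ) + (t : ℂ) * I))) *
          riemannZeta (1 + (c : ℂ) + (t : ℂ) * I) *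
          (β : ℂ) ^ (-((c : ℂ) + (t : ℂ) * I)) *
          ∑' k, (ω k : ℂ) ^ (-((c : ℂ) + (t : ℂ) * I)) := by
      have hζcont' : Continuous fun t : ℝ => riemannZeta (1 + (c : ℂ) + (t : ℂ) * I) := by
        refine hζcont.congr fun t => ?_
        congr 1
        ring
      exact ((((hΓcont.mul (continuous_const.sub (hccont 2 two_ne_zero))).mul hζcont').mul
        (hccont _ (Complex.ofReal_ne_zero.mpr hβ.ne'))).mul hTcont)
    have hWsum : Summable fun k => (β * ω k) ^ (-c) := by
      refine Summable.congr (hsum.mul_left (β ^ (-c))) fun k => (hrpow_mul k).symm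
    refine Integrable.mono' (hGint.norm.const_mul (∑' k, (β * ω k) ^ (-c)))
      hIcont.aestronglyMeasurable (ae_of_all _ fun t => ?_)
    rw [← hpt t]
    have hnsum : Summable fun k => ‖H k t‖ := by
      refine Summable.congr (f := fun k => (β * ω k) ^ (-c) * ‖G t‖) ?_ ?_
      · exact hWsum.mul_right _
      · intro k; exact (hHnorm k t).symm
    calc ‖∑' k, H k t‖ ≤ ∑' k, ‖H k t‖ := norm_tsum_le_tsum_norm hnsum
      _ = ∑' k, (β * ω k) ^ (-c) * ‖G t‖ := tsum_congr fun k => hHnorm k t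
      _ = (∑' k, (β * ω k) ^ (-c)) * ‖G t‖ := tsum_mul_right
  · exact hlog.tsum_eq
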